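/- Let K be a field of characteristic ≠ 2, let n be odd, and let J be an invertible n×n matrix over K with Jᵀ = J. Suppose X ∈ Mₙ(K) is J-skew-adjoint, i.e. Xᵀ·J + J·X = 0, and v ∈ Kⁿ is a nonzero vector with X·v = λ·v for some λ ≠ 0. Then there exists a nonzero J-skew-adjoint matrix Y with X·Y − Y·X = λ·Y; that is, λ is an eigenvalue of ad(X) acting on the space of J-skew-adjoint matrices. -/

import Mathlib

open Matrix

lemma aux_mul_vecMulVec {K : Type*} [Field K] {n : ℕ}
    (A : Matrix (Fin n) (Fin n) K) (v w : Fin n → K) :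
    A * vecMulVec v w = vecMulVec (A *ᵥ v) w := by
  ext i j
  simp [vecMulVec, Matrix.mul_apply, Matrix.mulVec, dotProduct,
    Finset.sum_mul, mul_assoc]

lemma aux_vecMulVec_mul {K : Type*} [Field K] {n : ℕ}
    (A : Matrix (Fin n) (Fin n) K) (v w : Fin n → K) :
    vecMulVec v w * A = vecMulVec v (w ᵥ* A) := by
  ext i j
  simp [vecMulVec, Matrix.mul_apply, Matrix.vecMul, dotProduct,
    Finset.mul_sum, mul_assoc]

lemma aux_vecMulVec_transpose {K : Type*} [Field K] {n : ℕ}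
    (v w : Fin n → K) : (vecMulVec v w)ᵀ = vecMulVec w v := by
  ext i j
  simp [vecMulVec, mul_comm]

/-- Odd orthogonal case: over a field of characteristic `≠ 2`, with `n` odd, `J`
invertible symmetric, `X` being `J`-skew-adjoint, every nonzero eigenvalue `λ` of `X`
(with eigenvector `v ≠ 0`) is a root value: there is a nonzero `J`-skew-adjoint `Y`
with `[X, Y] = λ Y`. -/
theorem eigenvalue_is_root_value_odd_orthogonal {K : Type*} [Field K]
    (h2 : (2 : K) ≠ 0) {n : ℕ} (hn : Odd n)
    (J X : Matrix (Fin n) (Fin n) K) (hJ : IsUnit J) (hJt : Jᵀ = J)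
    (hX : Xᵀ * J + J * X = 0)
    (v : Fin n → K) (hv : v ≠ 0) (lam : K) (hlam : lam ≠ 0)
    (hev : X *ᵥ v = lam • v) :
    ∃ Y : Matrix (Fin n) (Fin n) K,
      Y ≠ 0 ∧ Yᵀ * J + J * Y = 0 ∧ X * Y - Y * X = lam • Y := by
  -- Step 1: det X = 0
  have hXJ : Xᵀ * J = -(J * X) := by
    have := hX; rw [add_eq_zero_iff_eq_neg] at this; exact this
  have hJX : J * X = -(Xᵀ * J) := by
    have := hX; rw [add_comm, add_eq_zero_iff_eq_neg] at this; exact this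
  have hdetJ : J.det ≠ 0 := by
    simpa [Matrix.isUnit_iff_isUnit_det, isUnit_iff_ne_zero] using hJ
  have hdet : X.det = 0 := by
    have h1 : Xᵀ.det * J.det = (-(J * X)).det := by
      rw [← Matrix.det_mul, hXJ]
    rw [Matrix.det_neg, Matrix.det_mul, Matrix.det_transpose, Fintype.card_fin] at h1
    rw [hn.neg_one_pow] at h1
    have h2' : X.det * J.det + X.det * J.det = 0 := by
      linear_combination h1
    have : (2 : K) * (X.det * J.det) = 0 := by ring_nf; linear_combination h2'
    rcases mul_eq_zero.mp this with h | h
    · exact absurd h h2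
    · exact (mul_eq_zero.mp h).resolve_right hdetJ
  -- Step 2: kernel vector w
  obtain ⟨w, hw0, hw⟩ : ∃ w, w ≠ 0 ∧ X *ᵥ w = 0 := by
    have := (Matrix.exists_mulVec_eq_zero_iff (M := X)).mpr hdet
    obtain ⟨w, hw0, hw⟩ := this
    exact ⟨w, hw0, hw⟩
  -- The matrix M = v wᵀ - w vᵀ
  set M : Matrix (Fin n) (Fin n) K := vecMulVec v w - vecMulVec w v with hM
  have hMt : Mᵀ = -M := by
    simp [hM, Matrix.transpose_sub, aux_vecMulVec_transpose]
  have hMne : M ≠ 0 := by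
    intro h
    -- then v i * w j = w i * v j for all i j, so v is a multiple of w
    obtain ⟨j0, hj0⟩ : ∃ j, w j ≠ 0 := Function.ne_iff.mp hw0
    have hprop : ∀ i, v i * w j0 = w i * v j0 := fun i => by
      have := congrFun (congrFun h i) j0
      simpa [hM, vecMulVec, sub_eq_zero] using this
    have hveq : v = (v j0 / w j0) • w := by
      funext i
      simp only [Pi.smul_apply, smul_eq_mul]
      field_simp
      linear_combination (hprop i)
    have : X *ᵥ v = 0 := by
      rw [hveq, Matrix.mulVec_smul, hw, smul_zero]
    rw [hev] at this
    exact hv (by simpa [hlam] using smul_eq_zero.mp this)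
  refine ⟨M * J, ?_, ?_, ?_⟩
  · intro h
    apply hMne
    have := congrArg (· * J⁻¹) (h : M * J = 0)
    simpa [Matrix.mul_assoc, Matrix.mul_nonsing_inv J (isUnit_iff_ne_zero.mpr hdetJ)] using this
  · have : (M * J)ᵀ = -(J * M) := by
      rw [Matrix.transpose_mul, hJt, hMt, Matrix.mul_neg]
    rw [this]
    rw [Matrix.neg_mul, ← Matrix.mul_assoc]
    simp [Matrix.mul_assoc]
  · have hXM : X * M = lam • vecMulVec v w := by
      rw [hM, Matrix.mul_sub, aux_mul_vecMulVec, aux_mul_vecMulVec, hev, hw]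
      simp [vecMulVec, Matrix.smul_apply]
      ext i j
      simp [vecMulVec, mul_assoc]
    have hMXt : M * Xᵀ = -(lam • vecMulVec w v) := by
      rw [hM, Matrix.sub_mul, aux_vecMulVec_mul, aux_vecMulVec_mul,
        Matrix.vecMul_transpose, Matrix.vecMul_transpose, hev, hw]
      ext i j
      simp [vecMulVec, Pi.smul_apply, smul_eq_mul]
      ring
    have hYX : M * J * X = lam • (vecMulVec w v * J) := by
      rw [Matrix.mul_assoc, hJX, Matrix.mul_neg, ← Matrix.mul_assoc, hMXt]
      simp [Matrix.smul_mul]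
    rw [← Matrix.mul_assoc, hXM, hYX]
    rw [hM]
    simp [Matrix.sub_mul, Matrix.smul_mul, smul_sub]
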